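/- In the design-based stratified setup under Assumption 1, with k ≥ 2, define R_i = Y_i(1)/η + Y_i(0)/(1−η) with η = ℓ/k, and R̄_j = (1/k)Σ_{i∈λ_j}R_i. Then the difference-in-means estimator satisfies the identity Δ̂_n − Δ_n = (1/n)Σ_{j=1}^m Σ_{i∈λ_j}(R_i − R̄_j)D_i, and its variance satisfies n·Var[Δ̂_n] = (η(1−η)/((k−1)m)) Σ_{j=1}^m Σ_{i∈λ_j}(R_i − R̄_j)². -/

import Mathlib

open MeasureTheory ProbabilityTheory Filter Finset Topology

noncomputable section

namespace DesignBased

/-- The uniform (probability) measure on a finite set of outcomes. -/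
def uniformFinset {α : Type*} [MeasurableSpace α] (S : Finset α) : Measure α :=
  ((S.card : ENNReal))⁻¹ • ∑ d ∈ S, Measure.dirac d

/-- Assignment vectors for a stratum of size `k` with exactly `ℓ` treated units. -/
def assignSet (k ℓ : ℕ) : Finset (Fin k → Bool) :=
  Finset.univ.filter fun d => (Finset.univ.filter fun i => d i = true).card = ℓ

/-- Assumption 1: the treatment assignment `D` is distributed as the product, over the `m`
strata, of the uniform distribution on assignment vectors with exactly `ℓ` treated units. -/
def Assumption1 {Ω : Type*} [MeasurableSpace Ω] (P : Measure Ω) (m k ℓ : ℕ)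
    (D : Ω → Fin m → Fin k → Bool) : Prop :=
  Measurable D ∧
    Measure.map D P = Measure.pi fun _ : Fin m => uniformFinset (assignSet k ℓ)

variable {Ω : Type*}

/-- The difference-in-means estimator. -/
def hatDelta (m k ℓ : ℕ) (Y1 Y0 : Fin m → Fin k → ℝ)
    (D : Ω → Fin m → Fin k → Bool) (ω : Ω) : ℝ :=
  ((m : ℝ) * ℓ)⁻¹ * ∑ j, ∑ i, (if D ω j i then Y1 j i else 0)
    - ((m : ℝ) * ((k : ℝ) - ℓ))⁻¹ * ∑ j, ∑ i, (if D ω j i then 0 else Y0 j i)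

/-- The finite population average treatment effect. -/
def Delta (m k : ℕ) (Y1 Y0 : Fin m → Fin k → ℝ) : ℝ :=
  ((m : ℝ) * k)⁻¹ * ∑ j, ∑ i, (Y1 j i - Y0 j i)

/-- The stratum-level difference-in-means estimator. -/
def hatDeltaJ (m k ℓ : ℕ) (Y1 Y0 : Fin m → Fin k → ℝ)
    (D : Ω → Fin m → Fin k → Bool) (j : Fin m) (ω : Ω) : ℝ :=
  (ℓ : ℝ)⁻¹ * ∑ i, (if D ω j i then Y1 j i else 0)
    - ((k : ℝ) - ℓ)⁻¹ * ∑ i, (if D ω j i then 0 else Y0 j i)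

/-- The stratum-level average treatment effect. -/
def DeltaJ (m k : ℕ) (Y1 Y0 : Fin m → Fin k → ℝ) (j : Fin m) : ℝ :=
  (k : ℝ)⁻¹ * ∑ i, (Y1 j i - Y0 j i)

/-- The first stratum of the `j`-th pair of strata (strata are paired adjacently). -/
def pairA (m : ℕ) (j : Fin (m / 2)) : Fin m := ⟨2 * j.1, by have := j.2; omega⟩

/-- The second stratum of the `j`-th pair of strata. -/
def pairB (m : ℕ) (j : Fin (m / 2)) : Fin m := ⟨2 * j.1 + 1, by have := j.2; omega⟩

/-- τ̂²ₙ. -/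
def tauSq (m k ℓ : ℕ) (Y1 Y0 : Fin m → Fin k → ℝ)
    (D : Ω → Fin m → Fin k → Bool) (ω : Ω) : ℝ :=
  (m : ℝ)⁻¹ * ∑ j, (hatDeltaJ m k ℓ Y1 Y0 D j ω) ^ 2

/-- κ̂ₙ. -/
def kappaHat (m k ℓ : ℕ) (Y1 Y0 : Fin m → Fin k → ℝ)
    (D : Ω → Fin m → Fin k → Bool) (ω : Ω) : ℝ :=
  2 / (m : ℝ) * ∑ j : Fin (m / 2),
    hatDeltaJ m k ℓ Y1 Y0 D (pairA m j) ω * hatDeltaJ m k ℓ Y1 Y0 D (pairB m j) ω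

/-- The paired-strata variance estimator V̂ₙ. -/
def hatV (m k ℓ : ℕ) (Y1 Y0 : Fin m → Fin k → ℝ)
    (D : Ω → Fin m → Fin k → Bool) (ω : Ω) : ℝ :=
  (m : ℝ)⁻¹ * (tauSq m k ℓ Y1 Y0 D ω - kappaHat m k ℓ Y1 Y0 D ω)

/-- The Imai variance estimator V̂ᴵᴹₙ. -/
def hatVIM (m k ℓ : ℕ) (Y1 Y0 : Fin m → Fin k → ℝ)
    (D : Ω → Fin m → Fin k → Bool) (ω : Ω) : ℝ :=
  ((m : ℝ) * ((m : ℝ) - 1))⁻¹ *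
    ∑ j, (hatDeltaJ m k ℓ Y1 Y0 D j ω - hatDelta m k ℓ Y1 Y0 D ω) ^ 2

/-- The standard normal cumulative distribution function. -/
def stdNormCDF (x : ℝ) : ℝ := ((gaussianReal 0 1) (Set.Iic x)).toReal

/-- Conditional variance of `Z` given the sub-σ-algebra `m0`. -/
def condVar' {Ω' : Type*} (m0 : MeasurableSpace Ω') {mΩ : MeasurableSpace Ω'} (P : Measure Ω')
    (Z : Ω' → ℝ) : Ω' → ℝ :=
  P[fun ω => (Z ω - (P[Z|m0]) ω) ^ 2 | m0]

/-- The transformed outcome `Rᵢ = Yᵢ(1)/η + Yᵢ(0)/(1−η)`. -/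
def Rout (m k ℓ : ℕ) (Y1 Y0 : Fin m → Fin k → ℝ) (j : Fin m) (i : Fin k) : ℝ :=
  Y1 j i / ((ℓ : ℝ) / k) + Y0 j i / (1 - (ℓ : ℝ) / k)

/-- The stratum average `R̄ⱼ` of the transformed outcomes. -/
def Rbar (m k ℓ : ℕ) (Y1 Y0 : Fin m → Fin k → ℝ) (j : Fin m) : ℝ :=
  (k : ℝ)⁻¹ * ∑ i, Rout m k ℓ Y1 Y0 j i


section Aux

lemma comp_mem_assignSet {k ℓ : ℕ} (σ : Equiv.Perm (Fin k)) {d : Fin k → Bool}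
    (hd : d ∈ assignSet k ℓ) : d ∘ σ ∈ assignSet k ℓ := by
  simp only [assignSet, mem_filter, mem_univ, true_and, Function.comp] at hd ⊢
  rw [← hd]
  exact Finset.card_nbij (fun i => σ i) (by intro x hx; simpa using hx) (σ.injective.injOn)
    (by intro x hx; simp only [Set.mem_image]; exact ⟨σ.symm x, by simpa using hx, by simp⟩)

lemma sum_assignSet_comp {k ℓ : ℕ} (σ : Equiv.Perm (Fin k)) (f : (Fin k → Bool) → ℝ) :
    ∑ d ∈ assignSet k ℓ, f d = ∑ d ∈ assignSet k ℓ, f (d ∘ σ) := by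
  refine Finset.sum_nbij' (i := fun d => d ∘ σ.symm) (j := fun d => d ∘ σ)
    (fun d hd => comp_mem_assignSet σ.symm hd) (fun d hd => comp_mem_assignSet σ hd)
    ?_ ?_ ?_
  · intro d _; funext i; simp
  · intro d _; funext i; simp
  · intro d _; congr 1; funext i; simp

lemma sum_assignSet_eval {k ℓ : ℕ} (i i' : Fin k) (F : Bool → ℝ) :
    ∑ d ∈ assignSet k ℓ, F (d i) = ∑ d ∈ assignSet k ℓ, F (d i') := by
  rw [sum_assignSet_comp (Equiv.swap i i') (fun d => F (d i))]
  simp [Equiv.swap_apply_left]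

lemma exists_perm_pair {k : ℕ} {i i' j j' : Fin k} (hii : i ≠ i') (hjj : j ≠ j') :
    ∃ σ : Equiv.Perm (Fin k), σ i = j ∧ σ i' = j' := by
  set τ := Equiv.swap i j with hτ
  have hji' : j ≠ τ i' := by
    rcases eq_or_ne i' j with h | h
    · rw [hτ, h, Equiv.swap_apply_right]
      intro hji; exact hii (hji ▸ h.symm ▸ rfl)
    · rw [hτ, Equiv.swap_apply_of_ne_of_ne hii.symm h]
      exact h.symm
  refine ⟨τ.trans (Equiv.swap (τ i') j'), ?_, ?_⟩
  · simp only [Equiv.trans_apply, hτ, Equiv.swap_apply_left]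
    rw [← hτ, Equiv.swap_apply_of_ne_of_ne hji' hjj]
  · simp only [Equiv.trans_apply, Equiv.swap_apply_left]

lemma sum_assignSet_eval2 {k ℓ : ℕ} {i i' j j' : Fin k} (hii : i ≠ i') (hjj : j ≠ j')
    (F : Bool → Bool → ℝ) :
    ∑ d ∈ assignSet k ℓ, F (d i) (d i') = ∑ d ∈ assignSet k ℓ, F (d j) (d j') := by
  obtain ⟨σ, h1, h2⟩ := exists_perm_pair hii hjj
  rw [sum_assignSet_comp σ (fun d => F (d i) (d i'))]
  simp [Function.comp, h1, h2]

lemma sum_ind_of_mem {k ℓ : ℕ} {d : Fin k → Bool} (hd : d ∈ assignSet k ℓ) :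
    ∑ i, (if d i then (1 : ℝ) else 0) = ℓ := by
  simp only [assignSet, mem_filter, mem_univ, true_and] at hd
  rw [show (fun i => if d i then (1:ℝ) else 0) = fun i => if d i = true then (1:ℝ) else 0 by
    funext i; cases d i <;> simp]
  rw [Finset.sum_boole]
  exact_mod_cast congrArg (Nat.cast : ℕ → ℝ) hd

lemma assignSet_nonempty {k ℓ : ℕ} (hℓk : ℓ ≤ k) : (assignSet k ℓ).Nonempty := by
  refine ⟨fun i => decide ((i : ℕ) < ℓ), ?_⟩
  simp only [assignSet, mem_filter, mem_univ, true_and, decide_eq_true_eq]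
  have : (univ.filter fun i : Fin k => (i : ℕ) < ℓ)
      = (univ : Finset (Fin ℓ)).map (Fin.castLEEmb hℓk) := by
    ext x
    simp only [mem_filter, mem_univ, true_and, Finset.mem_map, Fin.castLEEmb]
    constructor
    · intro hx
      refine ⟨⟨x, hx⟩, ?_⟩
      simp [Fin.castLE, Fin.ext_iff]
    · rintro ⟨y, rfl⟩
      simpa using y.2
  rw [this, Finset.card_map, Finset.card_univ, Fintype.card_fin]

lemma assignSet_c1 {k ℓ : ℕ} (i : Fin k) :
    (k : ℝ) * ∑ d ∈ assignSet k ℓ, (if d i then (1:ℝ) else 0)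
      = (ℓ : ℝ) * (assignSet k ℓ).card := by
  have hsum : ∑ i' : Fin k, ∑ d ∈ assignSet k ℓ, (if d i' then (1:ℝ) else 0)
      = (ℓ : ℝ) * (assignSet k ℓ).card := by
    rw [Finset.sum_comm]
    rw [Finset.sum_congr rfl (fun d hd => sum_ind_of_mem hd)]
    simp [mul_comm]
  calc (k : ℝ) * ∑ d ∈ assignSet k ℓ, (if d i then (1:ℝ) else 0)
      = ∑ i' : Fin k, ∑ d ∈ assignSet k ℓ, (if d i then (1:ℝ) else 0) := by
        simp [Finset.sum_const, mul_comm]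
    _ = ∑ i' : Fin k, ∑ d ∈ assignSet k ℓ, (if d i' then (1:ℝ) else 0) :=
        Finset.sum_congr rfl fun i' _ => sum_assignSet_eval i i' (fun b => if b then 1 else 0)
    _ = (ℓ : ℝ) * (assignSet k ℓ).card := hsum

lemma assignSet_c2 {k ℓ : ℕ} (hk : 1 ≤ k) {i i' : Fin k} (h : i ≠ i') :
    (k : ℝ) * ((k : ℝ) - 1) *
        ∑ d ∈ assignSet k ℓ, (if d i then (1:ℝ) else 0) * (if d i' then (1:ℝ) else 0)
      = (ℓ : ℝ) * ((ℓ : ℝ) - 1) * (assignSet k ℓ).card := by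
  classical
  set c2 : Fin k → Fin k → ℝ := fun x y =>
    ∑ d ∈ assignSet k ℓ, (if d x then (1:ℝ) else 0) * (if d y then (1:ℝ) else 0) with hc2
  have hconst : ∀ x y : Fin k, x ≠ y → c2 x y = c2 i i' := fun x y hxy =>
    sum_assignSet_eval2 hxy h (fun a b => (if a then (1:ℝ) else 0) * (if b then 1 else 0))
  have h1 : ∑ x : Fin k, ∑ y ∈ Finset.univ.erase x, c2 x y
      = (k : ℝ) * ((k:ℝ) - 1) * c2 i i' := by
    rw [Finset.sum_congr rfl (fun x _ => Finset.sum_congr rfl fun y hy =>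
      hconst x y (Ne.symm (Finset.ne_of_mem_erase hy)))]
    simp [Finset.sum_const, Finset.card_erase_of_mem, mul_assoc, mul_comm, Fintype.card_fin]
    exact Or.inl (Or.inl (by rw [Nat.cast_sub hk, Nat.cast_one]))
  have h2 : ∑ x : Fin k, ∑ y ∈ Finset.univ.erase x, c2 x y
      = (ℓ : ℝ) * ((ℓ:ℝ) - 1) * (assignSet k ℓ).card := by
    have herase : ∀ x : Fin k, ∑ y ∈ Finset.univ.erase x, c2 x y
        = (∑ y : Fin k, c2 x y) - c2 x x :=
      fun x => Finset.sum_erase_eq_sub (Finset.mem_univ x)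
    rw [Finset.sum_congr rfl fun x _ => herase x, Finset.sum_sub_distrib]
    have hA : ∑ x : Fin k, ∑ y : Fin k, c2 x y
        = (ℓ:ℝ) * ℓ * (assignSet k ℓ).card := by
      have : ∀ x : Fin k, ∑ y : Fin k, c2 x y
          = ∑ d ∈ assignSet k ℓ, (if d x then (1:ℝ) else 0) * ℓ := by
        intro x
        rw [hc2]
        rw [Finset.sum_comm]
        refine Finset.sum_congr rfl fun d hd => ?_
        rw [← Finset.mul_sum, sum_ind_of_mem hd]
      rw [Finset.sum_congr rfl fun x _ => this x, Finset.sum_comm]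
      rw [Finset.sum_congr rfl (fun d hd => by
        rw [← Finset.sum_mul, sum_ind_of_mem hd])]
      simp [mul_comm, mul_assoc, mul_left_comm]
    have hB : ∑ x : Fin k, c2 x x = (ℓ:ℝ) * (assignSet k ℓ).card := by
      have : ∀ x : Fin k, c2 x x = ∑ d ∈ assignSet k ℓ, (if d x then (1:ℝ) else 0) := by
        intro x; rw [hc2]
        refine Finset.sum_congr rfl fun d _ => ?_
        cases d x <;> simp
      rw [Finset.sum_congr rfl fun x _ => this x, Finset.sum_comm]
      rw [Finset.sum_congr rfl fun d hd => sum_ind_of_mem hd]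
      simp [mul_comm]
    rw [hA, hB]; ring
  exact h1.symm.trans h2

lemma assignSet_lin {k ℓ : ℕ} (hk : 1 ≤ k) (a : Fin k → ℝ) (ha : ∑ i, a i = 0) :
    ∑ d ∈ assignSet k ℓ, (∑ i, a i * (if d i then (1:ℝ) else 0)) = 0 := by
  obtain ⟨i₀⟩ : Nonempty (Fin k) := ⟨⟨0, hk⟩⟩
  rw [Finset.sum_comm]
  have : ∀ i : Fin k, ∑ d ∈ assignSet k ℓ, a i * (if d i then (1:ℝ) else 0)
      = a i * ∑ d ∈ assignSet k ℓ, (if d i₀ then (1:ℝ) else 0) := by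
    intro i
    rw [← Finset.mul_sum, sum_assignSet_eval i i₀ (fun b => if b then 1 else 0)]
  rw [Finset.sum_congr rfl fun i _ => this i, ← Finset.sum_mul, ha, zero_mul]

lemma assignSet_sq {k ℓ : ℕ} (hk : 2 ≤ k) (hℓk : ℓ ≤ k)
    (a : Fin k → ℝ) (ha : ∑ i, a i = 0) :
    (((assignSet k ℓ).card : ℝ))⁻¹ *
        ∑ d ∈ assignSet k ℓ, (∑ i, a i * (if d i then (1:ℝ) else 0)) ^ 2
      = (ℓ : ℝ) * ((k : ℝ) - ℓ) / ((k : ℝ) * ((k : ℝ) - 1)) * ∑ i, a i ^ 2 := by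
  have hk0 : (k : ℝ) ≠ 0 := Nat.cast_ne_zero.2 (by omega)
  have hk1 : (k : ℝ) - 1 ≠ 0 := by
    have : (1:ℝ) < (k:ℝ) := by exact_mod_cast (by omega : 1 < k)
    linarith
  obtain ⟨d₀, hd₀⟩ := assignSet_nonempty (k := k) hℓk
  have hN : ((assignSet k ℓ).card : ℝ) ≠ 0 :=
    Nat.cast_ne_zero.2 (Finset.card_ne_zero_of_mem hd₀)
  set N := ((assignSet k ℓ).card : ℝ) with hNdef
  set i₀ : Fin k := ⟨0, by omega⟩ with hi₀
  set i₁ : Fin k := ⟨1, by omega⟩ with hi₁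
  have h01 : i₀ ≠ i₁ := by simp [hi₀, hi₁, Fin.ext_iff]
  set c1 : ℝ := ∑ d ∈ assignSet k ℓ, (if d i₀ then (1:ℝ) else 0) with hc1def
  set c2 : ℝ := ∑ d ∈ assignSet k ℓ,
    (if d i₀ then (1:ℝ) else 0) * (if d i₁ then (1:ℝ) else 0) with hc2def
  have hE : ∀ x y : Fin k,
      ∑ d ∈ assignSet k ℓ, (if d x then (1:ℝ) else 0) * (if d y then (1:ℝ) else 0)
        = if y = x then c1 else c2 := by
    intro x y
    by_cases hxy : y = x
    · subst hxy
      rw [if_pos rfl, hc1def]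
      calc ∑ d ∈ assignSet k ℓ, (if d y then (1:ℝ) else 0) * (if d y then (1:ℝ) else 0)
          = ∑ d ∈ assignSet k ℓ, (if d y then (1:ℝ) else 0) :=
            Finset.sum_congr rfl fun d _ => by cases d y <;> simp
        _ = ∑ d ∈ assignSet k ℓ, (if d i₀ then (1:ℝ) else 0) :=
            sum_assignSet_eval y i₀ (fun b => if b then (1:ℝ) else 0)
    · rw [if_neg hxy, hc2def]
      exact sum_assignSet_eval2 (Ne.symm hxy) h01
        (fun a b => (if a then (1:ℝ) else 0) * (if b then (1:ℝ) else 0))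
  have hexp : ∑ d ∈ assignSet k ℓ, (∑ i, a i * (if d i then (1:ℝ) else 0)) ^ 2
      = (c1 - c2) * ∑ i, a i ^ 2 := by
    have hsq : ∀ d : Fin k → Bool, (∑ i, a i * (if d i then (1:ℝ) else 0)) ^ 2
        = ∑ x, ∑ y, (a x * a y) * ((if d x then (1:ℝ) else 0) * (if d y then (1:ℝ) else 0)) := by
      intro d
      rw [sq, Finset.sum_mul_sum]
      exact Finset.sum_congr rfl fun x _ => Finset.sum_congr rfl fun y _ => by ring
    rw [Finset.sum_congr rfl fun d _ => hsq d, Finset.sum_comm]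
    have hinner : ∀ x : Fin k,
        ∑ d ∈ assignSet k ℓ, ∑ y : Fin k,
          (a x * a y) * ((if d x then (1:ℝ) else 0) * (if d y then (1:ℝ) else 0))
        = a x * a x * (c1 - c2) := by
      intro x
      rw [Finset.sum_comm]
      have : ∀ y : Fin k,
          ∑ d ∈ assignSet k ℓ,
            (a x * a y) * ((if d x then (1:ℝ) else 0) * (if d y then (1:ℝ) else 0))
          = (a x * a y) * c2 + (if y = x then a x * a y * (c1 - c2) else 0) := by
        intro y
        rw [← Finset.mul_sum, hE x y]
        split_ifs <;> ring
      rw [Finset.sum_congr rfl fun y _ => this y, Finset.sum_add_distrib]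
      rw [Finset.sum_ite_eq' Finset.univ x (fun y => a x * a y * (c1 - c2))]
      have : ∑ y : Fin k, a x * a y * c2 = (a x * c2) * ∑ y : Fin k, a y := by
        rw [Finset.mul_sum]
        exact Finset.sum_congr rfl fun y _ => by ring
      rw [this, ha]
      simp
    rw [Finset.sum_congr rfl fun x _ => hinner x, ← Finset.sum_mul,
      show ∑ x : Fin k, a x * a x = ∑ x : Fin k, a x ^ 2 from
        Finset.sum_congr rfl fun x _ => (sq (a x)).symm, mul_comm]
  rw [hexp]
  have e1 := assignSet_c1 (ℓ := ℓ) i₀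
  have e2 := assignSet_c2 (ℓ := ℓ) (by omega) h01
  have hc1v : c1 = (ℓ:ℝ) * N / (k:ℝ) := by
    rw [eq_div_iff hk0]; linear_combination e1
  have hc2v : c2 = (ℓ:ℝ) * ((ℓ:ℝ) - 1) * N / ((k:ℝ) * ((k:ℝ) - 1)) := by
    rw [eq_div_iff (mul_ne_zero hk0 hk1)]; linear_combination e2
  rw [hc1v, hc2v]
  field_simp
  ring

section MeasAux

variable {α : Type*} [MeasurableSpace α] [MeasurableSingletonClass α] [Finite α]

lemma uniformFinset_integral (S : Finset α) (f : α → ℝ) :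
    ∫ x, f x ∂(uniformFinset S) = ((S.card : ℝ))⁻¹ * ∑ d ∈ S, f d := by
  rw [uniformFinset, integral_smul_measure,
    integral_finset_sum_measure (fun d _ => Integrable.of_finite)]
  simp [integral_dirac, ENNReal.toReal_inv, smul_eq_mul]

omit [MeasurableSingletonClass α] [Finite α] in
lemma uniformFinset_isProbability {S : Finset α} (hS : S.Nonempty) :
    IsProbabilityMeasure (uniformFinset S) := by
  constructor
  rw [uniformFinset]
  simp only [Measure.smul_apply, Measure.coe_finset_sum, Finset.sum_apply,
    Measure.dirac_apply_of_mem (Set.mem_univ _), Finset.sum_const, nsmul_eq_mul, mul_one,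
    smul_eq_mul]
  exact ENNReal.inv_mul_cancel (by exact_mod_cast Finset.card_ne_zero.2 hS)
    (ENNReal.natCast_ne_top _)

lemma uniformFinset_compl_null (S : Finset α) : uniformFinset S {x | x ∉ S} = 0 := by
  rw [uniformFinset]
  simp only [Measure.smul_apply, Measure.coe_finset_sum, Finset.sum_apply, smul_eq_mul]
  rw [Finset.sum_eq_zero, mul_zero]
  intro d hd
  rw [Measure.dirac_apply' _ MeasurableSet.of_discrete]
  simp [Set.indicator, hd]

lemma prod_eq_of_eq_one {β : Type*} [CommMonoid β] {n : ℕ} {j j' : Fin n} (h : j ≠ j')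
    (u : Fin n → β) (hu : ∀ i, i ≠ j → i ≠ j' → u i = 1) : ∏ i, u i = u j * u j' := by
  rw [← Finset.mul_prod_erase Finset.univ u (Finset.mem_univ j),
    ← Finset.mul_prod_erase _ u (Finset.mem_erase.2 ⟨h.symm, Finset.mem_univ j'⟩),
    Finset.prod_eq_one, mul_one]
  intro i hi
  simp only [Finset.mem_erase] at hi
  exact hu i hi.2.1 hi.1

variable {n : ℕ} (ν : Measure α) [IsProbabilityMeasure ν]

lemma integral_pi_eval (j : Fin n) (f : α → ℝ) :
    ∫ x : Fin n → α, f (x j) ∂(Measure.pi fun _ => ν) = ∫ e, f e ∂ν := by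
  letI : MeasureSpace α := ⟨ν⟩
  haveI : IsProbabilityMeasure (volume : Measure α) := ‹IsProbabilityMeasure ν›
  have hvol : (Measure.pi fun _ : Fin n => ν) = (volume : Measure (Fin n → α)) :=
    (volume_pi).symm
  rw [hvol]
  have h := MeasureTheory.integral_fintype_prod_eq_prod (ι := Fin n) (E := fun _ => α)
      (f := fun i e => if i = j then f e else 1) (μ := fun _ => volume)
  simp only [Finset.prod_ite_eq', Finset.mem_univ, if_true] at h
  rw [volume_pi, h]
  have : ∀ i : Fin n, ∫ e, (if i = j then f e else 1) ∂(volume : Measure α)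
      = if i = j then ∫ e, f e ∂(volume : Measure α) else 1 := by
    intro i; split_ifs <;> simp
  rw [Finset.prod_congr rfl fun i _ => this i, Finset.prod_ite_eq', if_pos (Finset.mem_univ j)]
  rfl

lemma integral_pi_eval2 {j j' : Fin n} (h : j ≠ j') (f g : α → ℝ) :
    ∫ x : Fin n → α, f (x j) * g (x j') ∂(Measure.pi fun _ => ν)
      = (∫ e, f e ∂ν) * (∫ e, g e ∂ν) := by
  letI : MeasureSpace α := ⟨ν⟩
  haveI : IsProbabilityMeasure (volume : Measure α) := ‹IsProbabilityMeasure ν›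
  have hvol : (Measure.pi fun _ : Fin n => ν) = (volume : Measure (Fin n → α)) :=
    (volume_pi).symm
  rw [hvol]
  have h2 := MeasureTheory.integral_fintype_prod_eq_prod (ι := Fin n) (E := fun _ => α)
      (f := fun i e => if i = j then f e else if i = j' then g e else 1) (μ := fun _ => volume)
  have hL : ∀ x : Fin n → α,
      (∏ i, (if i = j then f (x i) else if i = j' then g (x i) else 1)) = f (x j) * g (x j') := by
    intro x
    rw [prod_eq_of_eq_one h (fun i => if i = j then f (x i) else if i = j' then g (x i) else 1)
      (fun i hij hij' => by simp [hij, hij'])]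
    simp [h, h.symm, Ne.symm h]
  have hR : (∏ i, ∫ e, (if i = j then f e else if i = j' then g e else 1) ∂(volume : Measure α))
      = (∫ e, f e ∂(volume : Measure α)) * ∫ e, g e ∂(volume : Measure α) := by
    rw [prod_eq_of_eq_one h _ (fun i hij hij' => by simp [hij, hij'])]
    simp [h, h.symm, Ne.symm h]
  simp only [hL] at h2
  rw [volume_pi, h2, hR]
  rfl

end MeasAux

lemma key_identity (m k ℓ : ℕ) (hℓ : 0 < ℓ) (hℓk : ℓ < k) (Y1 Y0 : Fin m → Fin k → ℝ)
    (d : Fin m → Fin k → Bool) (hd : ∀ j, d j ∈ assignSet k ℓ) :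
    hatDelta m k ℓ Y1 Y0 (fun x => x) d - Delta m k Y1 Y0
      = ((m : ℝ) * k)⁻¹ * ∑ j, ∑ i,
          (Rout m k ℓ Y1 Y0 j i - Rbar m k ℓ Y1 Y0 j) * (if d j i then 1 else 0) := by
  have hk0 : (k : ℝ) ≠ 0 := Nat.cast_ne_zero.2 (by omega)
  have hl0 : (ℓ : ℝ) ≠ 0 := Nat.cast_ne_zero.2 (by omega)
  have hlk : (ℓ : ℝ) < (k : ℝ) := by exact_mod_cast hℓk
  have hkl : (k : ℝ) - (ℓ : ℝ) ≠ 0 := by linarith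
  have heta : 1 - (ℓ : ℝ) / k ≠ 0 := by
    rw [sub_ne_zero]
    intro hcon
    have : (ℓ : ℝ) = k := by field_simp at hcon; linarith
    exact hkl (by linarith)
  have hstk : ∀ j : Fin m,
      (ℓ : ℝ)⁻¹ * (∑ i, (if d j i then Y1 j i else 0))
        - ((k : ℝ) - ℓ)⁻¹ * (∑ i, (if d j i then 0 else Y0 j i))
        - (k : ℝ)⁻¹ * (∑ i, (Y1 j i - Y0 j i))
      = (k : ℝ)⁻¹ * ∑ i, (Rout m k ℓ Y1 Y0 j i - Rbar m k ℓ Y1 Y0 j)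
          * (if d j i then 1 else 0) := by
    intro j
    set A1 : ℝ := ∑ i, (if d j i then Y1 j i else 0) with hA1
    set A0 : ℝ := ∑ i, (if d j i then Y0 j i else 0) with hA0
    set B1 : ℝ := ∑ i, Y1 j i with hB1
    set B0 : ℝ := ∑ i, Y0 j i with hB0
    have hS : ∑ i, (if d j i then (1:ℝ) else 0) = (ℓ : ℝ) := sum_ind_of_mem (hd j)
    have hu0 : ∑ i, (if d j i then (0:ℝ) else Y0 j i) = B0 - A0 := by
      rw [hB0, hA0, ← Finset.sum_sub_distrib]
      exact Finset.sum_congr rfl fun i _ => by cases d j i <;> simp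
    have hv : ∑ i, (Y1 j i - Y0 j i) = B1 - B0 := Finset.sum_sub_distrib _ _
    have hRbar : Rbar m k ℓ Y1 Y0 j
        = (k:ℝ)⁻¹ * (B1 / ((ℓ:ℝ)/k) + B0 / (1 - (ℓ:ℝ)/k)) := by
      rw [Rbar]
      congr 1
      rw [show (fun i => Rout m k ℓ Y1 Y0 j i) = fun i =>
        Y1 j i / ((ℓ:ℝ)/k) + Y0 j i / (1 - (ℓ:ℝ)/k) from rfl, Finset.sum_add_distrib,
        ← Finset.sum_div, ← Finset.sum_div, hB1, hB0]
    have hw : ∑ i, (Rout m k ℓ Y1 Y0 j i - Rbar m k ℓ Y1 Y0 j) * (if d j i then 1 else 0)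
        = A1 / ((ℓ:ℝ)/k) + A0 / (1 - (ℓ:ℝ)/k) - Rbar m k ℓ Y1 Y0 j * (ℓ : ℝ) := by
      have : ∀ i, (Rout m k ℓ Y1 Y0 j i - Rbar m k ℓ Y1 Y0 j) * (if d j i then (1:ℝ) else 0)
          = ((if d j i then Y1 j i else 0) / ((ℓ:ℝ)/k)
            + (if d j i then Y0 j i else 0) / (1 - (ℓ:ℝ)/k))
            - Rbar m k ℓ Y1 Y0 j * (if d j i then (1:ℝ) else 0) := by
        intro i
        rw [Rout]
        cases d j i <;> simp
      rw [Finset.sum_congr rfl fun i _ => this i, Finset.sum_sub_distrib,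
        Finset.sum_add_distrib, ← Finset.sum_div, ← Finset.sum_div, ← hA1, ← hA0,
        ← Finset.mul_sum, hS]
    rw [hu0, hv, hw, hRbar]
    field_simp
    ring
  rw [hatDelta, Delta]
  have hsplit : ∀ (c : ℝ) (F : Fin m → Fin k → ℝ),
      ((m:ℝ) * c)⁻¹ * ∑ j, ∑ i, F j i = (m:ℝ)⁻¹ * ∑ j, c⁻¹ * ∑ i, F j i := by
    intro c F
    rw [mul_inv, mul_assoc, Finset.mul_sum]
  rw [hsplit, hsplit, hsplit, hsplit]
  rw [← mul_sub, ← mul_sub, ← Finset.sum_sub_distrib, ← Finset.sum_sub_distrib]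
  congr 1
  exact Finset.sum_congr rfl fun j _ => hstk j

end Aux

/-- Under Assumption 1 with `k ≥ 2`: almost surely
`Δ̂ₙ − Δₙ = (1/n) Σⱼ Σ_{i∈λⱼ} (Rᵢ − R̄ⱼ) Dᵢ`, and
`n·Var[Δ̂ₙ] = (η(1−η)/((k−1)m)) Σⱼ Σ_{i∈λⱼ} (Rᵢ − R̄ⱼ)²`. -/
theorem diff_in_means_representation {Ω : Type*} [MeasurableSpace Ω] (P : Measure Ω)
    [IsProbabilityMeasure P] (m k ℓ : ℕ) (hk : 2 ≤ k) (hℓ : 0 < ℓ) (hℓk : ℓ < k)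
    (Y1 Y0 : Fin m → Fin k → ℝ) (D : Ω → Fin m → Fin k → Bool)
    (hD : Assumption1 P m k ℓ D) :
    (∀ᵐ ω ∂P, hatDelta m k ℓ Y1 Y0 D ω - Delta m k Y1 Y0
        = ((m : ℝ) * k)⁻¹ * ∑ j, ∑ i,
            (Rout m k ℓ Y1 Y0 j i - Rbar m k ℓ Y1 Y0 j) *
              (if D ω j i then 1 else 0)) ∧
    (m : ℝ) * k * variance (hatDelta m k ℓ Y1 Y0 D) P
      = ((ℓ : ℝ) / k) * (1 - (ℓ : ℝ) / k) / (((k : ℝ) - 1) * m) *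
          ∑ j, ∑ i, (Rout m k ℓ Y1 Y0 j i - Rbar m k ℓ Y1 Y0 j) ^ 2 := by
  classical
  obtain ⟨hDmeas, hDdist⟩ := hD
  have hk0 : (k : ℝ) ≠ 0 := Nat.cast_ne_zero.2 (by omega)
  have hk1 : (k : ℝ) - 1 ≠ 0 := by
    have : (1:ℝ) < (k:ℝ) := by exact_mod_cast (by omega : 1 < k)
    linarith
  set ν : Measure (Fin k → Bool) := uniformFinset (assignSet k ℓ) with hν
  haveI hνP : IsProbabilityMeasure ν := uniformFinset_isProbability (assignSet_nonempty hℓk.le)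
  set μ : Measure (Fin m → Fin k → Bool) := Measure.pi fun _ => ν with hμ
  haveI : IsProbabilityMeasure μ := by rw [hμ]; infer_instance
  have hnull : μ {x : Fin m → Fin k → Bool | ¬ ∀ j, x j ∈ assignSet k ℓ} = 0 := by
    have hsub : {x : Fin m → Fin k → Bool | ¬ ∀ j, x j ∈ assignSet k ℓ}
        ⊆ ⋃ j, Function.eval j ⁻¹' {e : Fin k → Bool | e ∉ assignSet k ℓ} := by
      intro x hx
      simp only [Set.mem_setOf_eq, not_forall] at hx
      obtain ⟨j, hj⟩ := hx
      exact Set.mem_iUnion.2 ⟨j, hj⟩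
    refine measure_mono_null hsub (measure_iUnion_null fun j => ?_)
    rw [hμ]
    exact Measure.pi_eval_preimage_null _ (uniformFinset_compl_null _)
  set H : (Fin m → Fin k → Bool) → ℝ := fun x => hatDelta m k ℓ Y1 Y0 (fun y => y) x with hH
  constructor
  · have hae : ∀ᵐ ω ∂P, ∀ j, D ω j ∈ assignSet k ℓ := by
      rw [ae_iff]
      have hset : {ω | ¬ ∀ j, D ω j ∈ assignSet k ℓ}
          = D ⁻¹' {x | ¬ ∀ j, x j ∈ assignSet k ℓ} := rfl
      rw [hset, ← Measure.map_apply hDmeas MeasurableSet.of_discrete, hDdist]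
      exact hnull
    filter_upwards [hae] with ω hω
    exact key_identity m k ℓ hℓ hℓk Y1 Y0 (D ω) hω
  · rcases Nat.eq_zero_or_pos m with hm | hm
    · subst hm
      simp
    have hm0 : (m : ℝ) ≠ 0 := Nat.cast_ne_zero.2 hm.ne'
    have hmeasH : Measurable H := Measurable.of_discrete
    obtain ⟨C, hC⟩ := Finite.exists_le fun x : Fin m → Fin k → Bool => |H x|
    have hfunDef : hatDelta m k ℓ Y1 Y0 D = H ∘ D := rfl
    have hmemP : MemLp (hatDelta m k ℓ Y1 Y0 D) 2 P := by
      rw [hfunDef]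
      refine MemLp.of_bound ((hmeasH.comp hDmeas).aestronglyMeasurable) C
        (ae_of_all _ fun ω => ?_)
      rw [Function.comp_apply, Real.norm_eq_abs]
      exact hC (D ω)
    have hveq : variance (hatDelta m k ℓ Y1 Y0 D) P = variance H μ := by
      rw [variance_eq_sub hmemP, variance_eq_sub (MemLp.of_discrete (f := H) (p := 2) (μ := μ))]
      have hInt1 : (μ : Measure (Fin m → Fin k → Bool))[H ^ 2]
          = P[(hatDelta m k ℓ Y1 Y0 D) ^ 2] := by
        rw [← hDdist, integral_map hDmeas.aemeasurable
          (Measurable.aestronglyMeasurable Measurable.of_discrete)]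
        rfl
      have hInt2 : (μ : Measure (Fin m → Fin k → Bool))[H]
          = P[hatDelta m k ℓ Y1 Y0 D] := by
        rw [← hDdist, integral_map hDmeas.aemeasurable
          (Measurable.aestronglyMeasurable Measurable.of_discrete)]
        rfl
      rw [hInt1, hInt2]
    set a : Fin m → Fin k → ℝ := fun j i => Rout m k ℓ Y1 Y0 j i - Rbar m k ℓ Y1 Y0 j with haa
    set g : Fin m → (Fin k → Bool) → ℝ := fun j e => ∑ i, a j i * (if e i then 1 else 0) with hg
    have ha0 : ∀ j, ∑ i, a j i = 0 := by
      intro j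
      rw [haa]
      simp only
      rw [Finset.sum_sub_distrib, Finset.sum_const, Finset.card_univ, Fintype.card_fin,
        nsmul_eq_mul, Rbar, ← mul_assoc, mul_inv_cancel₀ hk0, one_mul, sub_self]
    set c : ℝ := ((m:ℝ) * k)⁻¹ with hc
    set K : ℝ := (ℓ : ℝ) * ((k : ℝ) - ℓ) / ((k : ℝ) * ((k : ℝ) - 1)) with hK
    set G : (Fin m → Fin k → Bool) → ℝ :=
      fun x => Delta m k Y1 Y0 + c * ∑ j, g j (x j) with hG
    have hHG : H =ᵐ[μ] G := by
      have hae2 : ∀ᵐ x ∂μ, ∀ j, x j ∈ assignSet k ℓ := by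
        rw [ae_iff]; exact hnull
      filter_upwards [hae2] with x hx
      have hkey : H x - Delta m k Y1 Y0 = c * ∑ j, g j (x j) :=
        key_identity m k ℓ hℓ hℓk Y1 Y0 x hx
      rw [hG]
      simp only
      linarith [hkey]
    have hIntg : ∀ (f : (Fin m → Fin k → Bool) → ℝ), Integrable f μ :=
      fun f => Integrable.of_finite
    have hEg : ∀ j : Fin m, ∫ e, g j e ∂ν = 0 := by
      intro j
      rw [hν, uniformFinset_integral]
      rw [show ∑ d ∈ assignSet k ℓ, g j d
          = ∑ d ∈ assignSet k ℓ, (∑ i, a j i * (if d i then (1:ℝ) else 0)) from rfl]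
      rw [assignSet_lin (by omega) (a j) (ha0 j), mul_zero]
    have hVg : ∀ j : Fin m, ∫ e, g j e * g j e ∂ν = K * ∑ i, a j i ^ 2 := by
      intro j
      rw [hν, uniformFinset_integral,
        show ∑ d ∈ assignSet k ℓ, g j d * g j d
          = ∑ d ∈ assignSet k ℓ, (∑ i, a j i * (if d i then (1:ℝ) else 0)) ^ 2 from
          Finset.sum_congr rfl fun d _ => (sq (g j d)).symm]
      exact assignSet_sq hk hℓk.le (a j) (ha0 j)
    have hEW : ∫ x, (∑ j, g j (x j)) ∂μ = 0 := by
      rw [integral_finset_sum _ (fun j _ => hIntg _)]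
      refine Finset.sum_eq_zero fun j _ => ?_
      rw [hμ]
      rw [show (∫ x : Fin m → Fin k → Bool, g j (x j) ∂(Measure.pi fun _ => ν))
        = ∫ e, g j e ∂ν from integral_pi_eval ν j (g j)]
      exact hEg j
    have hEG : ∫ x, G x ∂μ = Delta m k Y1 Y0 := by
      rw [hG]
      simp only
      rw [integral_add (integrable_const _) (hIntg _), integral_const, integral_const_mul, hEW]
      simp
    have hEW2 : ∫ x, (∑ j, g j (x j)) * (∑ j', g j' (x j')) ∂μ
        = ∑ j, (K * ∑ i, a j i ^ 2) := by
      calc ∫ x, (∑ j, g j (x j)) * (∑ j', g j' (x j')) ∂μ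
          = ∫ x, ∑ j, ∑ j', g j (x j) * g j' (x j') ∂μ := by
            refine integral_congr_ae (ae_of_all _ fun x => ?_)
            exact Finset.sum_mul_sum _ _ _ _
        _ = ∑ j, ∑ j', ∫ x, g j (x j) * g j' (x j') ∂μ := by
            rw [integral_finset_sum _ (fun j _ => hIntg _)]
            exact Finset.sum_congr rfl fun j _ => integral_finset_sum _ (fun j' _ => hIntg _)
        _ = ∑ j, ∑ j', (if j' = j then K * ∑ i, a j i ^ 2 else 0) := by
            refine Finset.sum_congr rfl fun j _ => Finset.sum_congr rfl fun j' _ => ?_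
            by_cases hjj : j' = j
            · subst hjj
              rw [if_pos rfl, hμ]
              rw [show (∫ x : Fin m → Fin k → Bool, g j' (x j') * g j' (x j')
                  ∂(Measure.pi fun _ => ν))
                = ∫ e, g j' e * g j' e ∂ν from
                  integral_pi_eval ν j' (fun e => g j' e * g j' e)]
              exact hVg j'
            · rw [if_neg hjj, hμ]
              rw [show (∫ x : Fin m → Fin k → Bool, g j (x j) * g j' (x j')
                  ∂(Measure.pi fun _ => ν))
                = (∫ e, g j e ∂ν) * ∫ e, g j' e ∂ν from
                  integral_pi_eval2 ν (fun hc => hjj hc.symm) (g j) (g j')]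
              rw [hEg j, zero_mul]
        _ = ∑ j, (K * ∑ i, a j i ^ 2) := by
            refine Finset.sum_congr rfl fun j _ => ?_
            rw [Finset.sum_ite_eq' Finset.univ j (fun _ => K * ∑ i, a j i ^ 2),
              if_pos (Finset.mem_univ j)]
    have hEG2 : ∫ x, G x * G x ∂μ
        = Delta m k Y1 Y0 ^ 2 + c ^ 2 * ∑ j, (K * ∑ i, a j i ^ 2) := by
      have hGx : ∀ x : Fin m → Fin k → Bool, G x * G x
          = Delta m k Y1 Y0 ^ 2 + ((2 * Delta m k Y1 Y0 * c) * (∑ j, g j (x j))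
            + c ^ 2 * ((∑ j, g j (x j)) * (∑ j', g j' (x j')))) := by
        intro x
        rw [hG]
        ring
      rw [integral_congr_ae (ae_of_all _ hGx),
        integral_add (integrable_const _) (hIntg _),
        integral_add (hIntg _) (hIntg _), integral_const, integral_const_mul,
        integral_const_mul, hEW, hEW2]
      simp
    have hvarH : variance H μ = c ^ 2 * ∑ j, (K * ∑ i, a j i ^ 2) := by
      rw [variance_eq_sub (MemLp.of_discrete (f := H) (p := 2) (μ := μ))]
      have h1 : (μ : Measure (Fin m → Fin k → Bool))[H ^ 2] = ∫ x, G x * G x ∂μ :=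
        integral_congr_ae (hHG.mono fun x hx => by
          rw [Pi.pow_apply, hx]; ring)
      have h2 : (μ : Measure (Fin m → Fin k → Bool))[H] = Delta m k Y1 Y0 :=
        (integral_congr_ae hHG).trans hEG
      rw [h1, h2, hEG2]
      ring
    rw [hveq, hvarH,
      show ∑ j, (K * ∑ i, a j i ^ 2) = K * ∑ j, ∑ i, a j i ^ 2 from
        (Finset.mul_sum _ _ _).symm, hc, hK]
    field_simp
    ring

end DesignBased
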